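/- Let X_{ij}, 1 ≤ i,j ≤ n, be i.i.d. standard normal, and define the greedy permutation π* by π*(1) = argmax_j X_{1j} and π*(i) = argmax_{j ∉ π*({1,...,i-1})} X_{ij}. Then the random variables X_{1,π*(1)}, ..., X_{n,π*(n)} are independent, and X_{i,π*(i)} is distributed as the maximum of n−i+1 i.i.d. standard normal random variables. -/

import Mathlib

open MeasureTheory ProbabilityTheory Real

noncomputable def stdNormalCDF (r : ℝ) : ℝ := ((gaussianReal 0 1) (Set.Iic r)).toReal

section Aux

variable {Ω : Type*} [MeasurableSpace Ω] (μ : Measure Ω) [IsProbabilityMeasure μ]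
  {n : ℕ} (X : Fin n → Fin n → Ω → ℝ) (πstar : Ω → Equiv.Perm (Fin n))

/-- CDF value as ennreal. -/
noncomputable def Phi (t : ℝ) : ENNReal := (gaussianReal 0 1) (Set.Iic t)

def selE (i : Fin n) (t : ℝ) : Set Ω :=
  {ω | ∀ j, (∀ k, k < i → πstar ω k ≠ j) → X i j ω ≤ t}

def selD (X : Fin n → Fin n → Ω → ℝ) (v : Fin n → Fin n) (i : Fin n) (t : ℝ) : Set Ω :=
  {ω | ∀ j, (∀ k, k < i → v k ≠ j) → X i j ω ≤ t}

def selB (X : Fin n → Fin n → Ω → ℝ) (v : Fin n → Fin n) (m : Fin n) : Set Ω :=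
  {ω | ∀ k, k < m → ∀ j, (∀ l, l < k → v l ≠ j) → X k j ω ≤ X k (v k) ω}

def trunc (πstar : Ω → Equiv.Perm (Fin n)) (m : Fin n) (ω : Ω) : Fin n → Fin n :=
  fun k => if k < m then πstar ω k else m

def tieSet (X : Fin n → Fin n → Ω → ℝ) : Set Ω :=
  ⋃ (i : Fin n) (j : Fin n) (j' : Fin n) (_ : j ≠ j'), {ω | X i j ω = X i j' ω}

def goodv (m : Fin n) (v : Fin n → Fin n) : Prop :=
  (∀ k l, k < l → l < m → v k ≠ v l) ∧ ∀ k, ¬ k < m → v k = m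

end Aux
section Aux2

variable {Ω : Type*} [MeasurableSpace Ω] {μ : Measure Ω}
  {n : ℕ} {X : Fin n → Fin n → Ω → ℝ} {πstar : Ω → Equiv.Perm (Fin n)}

lemma selE_eq (hgreedy : ∀ ω (i j : Fin n), (∀ k, k < i → πstar ω k ≠ j) →
      X i j ω ≤ X i (πstar ω i) ω) (i : Fin n) (t : ℝ) :
    {ω | X i (πstar ω i) ω ≤ t} = selE X πstar i t := by
  ext ω
  constructor
  · intro h j hj
    exact le_trans (hgreedy ω i j hj) h
  · intro h
    exact h (πstar ω i) (fun k hk hkj => absurd ((πstar ω).injective hkj) (ne_of_lt hk))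

lemma selE_measurable (hmeas : ∀ i j, Measurable (X i j))
    (hπmeas : ∀ i, Measurable (fun ω => πstar ω i)) (i : Fin n) (t : ℝ) :
    MeasurableSet (selE X πstar i t) := by
  have : selE X πstar i t =
      ⋂ j, ({ω | ∀ k, k < i → πstar ω k ≠ j}ᶜ ∪ {ω | X i j ω ≤ t}) := by
    ext ω
    simp only [selE, Set.mem_setOf_eq, Set.mem_iInter, Set.mem_union, Set.mem_compl_iff]
    constructor
    · intro h j
      by_cases hj : ∀ k, k < i → πstar ω k ≠ j
      · exact Or.inr (h j hj)
      · exact Or.inl hj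
    · intro h j hj
      rcases h j with h' | h'
      · exact absurd hj h'
      · exact h'
  rw [this]
  refine MeasurableSet.iInter fun j => MeasurableSet.union (MeasurableSet.compl ?_)
    (hmeas i j measurableSet_Iic)
  have : {ω : Ω | ∀ k, k < i → πstar ω k ≠ j} =
      ⋂ (k) (_ : k < i), (fun ω => πstar ω k) ⁻¹' {j}ᶜ := by
    ext ω; simp [Set.mem_iInter]
  rw [this]
  exact MeasurableSet.iInter fun k => MeasurableSet.iInter fun _ =>
    (hπmeas k) (MeasurableSet.compl (measurableSet_singleton j))

lemma selD_measurable (hmeas : ∀ i j, Measurable (X i j)) (v : Fin n → Fin n)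
    (i : Fin n) (t : ℝ) : MeasurableSet (selD X v i t) := by
  have : selD X v i t = ⋂ (j) (_ : ∀ k, k < i → v k ≠ j), {ω | X i j ω ≤ t} := by
    ext ω; simp [selD]
  rw [this]
  exact MeasurableSet.iInter fun j => MeasurableSet.iInter fun _ =>
    hmeas i j measurableSet_Iic

lemma selB_measurable (hmeas : ∀ i j, Measurable (X i j)) (v : Fin n → Fin n)
    (m : Fin n) : MeasurableSet (selB X v m) := by
  have : selB X v m = ⋂ (k) (_ : k < m) (j) (_ : ∀ l, l < k → v l ≠ j),
      {ω | X k j ω ≤ X k (v k) ω} := by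
    ext ω; simp [selB]
  rw [this]
  refine MeasurableSet.iInter fun k => MeasurableSet.iInter fun _ =>
    MeasurableSet.iInter fun j => MeasurableSet.iInter fun _ => ?_
  exact measurableSet_le (hmeas k j) (hmeas k (v k))

lemma trunc_fiber_measurable (hπmeas : ∀ i, Measurable (fun ω => πstar ω i))
    (m : Fin n) (v : Fin n → Fin n) :
    MeasurableSet {ω | trunc πstar m ω = v} := by
  have : {ω | trunc πstar m ω = v} = ⋂ k, {ω | trunc πstar m ω k = v k} := by
    ext ω; simp [funext_iff, Set.mem_iInter]
  rw [this]
  refine MeasurableSet.iInter fun k => ?_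
  by_cases hk : k < m
  · have : {ω | trunc πstar m ω k = v k} = (fun ω => πstar ω k) ⁻¹' {v k} := by
      ext ω; simp [trunc, hk]
    rw [this]
    exact (hπmeas k) (measurableSet_singleton _)
  · have : {ω | trunc πstar m ω k = v k} = {ω | (m : Fin n) = v k} := by
      ext ω; simp [trunc, hk]
    rw [this]
    by_cases h : (m : Fin n) = v k <;> simp [h]

lemma fiber_selE_eq_selD {m : Fin n} {v : Fin n → Fin n} {ω : Ω}
    (hω : trunc πstar m ω = v) {i : Fin n} (him : i ≤ m) (t : ℝ) :
    ω ∈ selE X πstar i t ↔ ω ∈ selD X v i t := by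
  have hvk : ∀ k, k < i → v k = πstar ω k := fun k hk => by
    rw [← hω]; simp [trunc, lt_of_lt_of_le hk him]
  constructor
  · intro h j hj
    exact h j fun k hk => (hvk k hk) ▸ hj k hk
  · intro h j hj
    exact h j fun k hk => (hvk k hk) ▸ hj k hk

lemma fiber_empty_of_not_good {m : Fin n} {v : Fin n → Fin n} (hv : ¬ goodv m v) :
    {ω : Ω | trunc πstar m ω = v} = ∅ := by
  ext ω
  simp only [Set.mem_setOf_eq, Set.mem_empty_iff_false, iff_false]
  intro hω
  apply hv
  constructor
  · intro k l hkl hlm hkv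
    have hk : k < m := lt_trans hkl hlm
    have : πstar ω k = πstar ω l := by
      have h1 : v k = πstar ω k := by rw [← hω]; simp [trunc, hk]
      have h2 : v l = πstar ω l := by rw [← hω]; simp [trunc, hlm]
      rw [← h1, ← h2, hkv]
    exact absurd ((πstar ω).injective this) (ne_of_lt hkl)
  · intro k hk
    rw [← hω]; simp [trunc, hk]

lemma fiber_iff_selB (hgreedy : ∀ ω (i j : Fin n), (∀ k, k < i → πstar ω k ≠ j) →
      X i j ω ≤ X i (πstar ω i) ω)
    {m : Fin n} {v : Fin n → Fin n} (hv : goodv m v) {ω : Ω}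
    (hω : ω ∉ tieSet X) : trunc πstar m ω = v ↔ ω ∈ selB X v m := by
  constructor
  · intro h
    intro k hk j hj
    have hvk : ∀ l, l < m → v l = πstar ω l := fun l hl => by
      rw [← h]; simp [trunc, hl]
    have := hgreedy ω k j (fun l hl => (hvk l (lt_trans hl hk)) ▸ hj l hl)
    rwa [← hvk k hk] at this
  · intro hB
    have keyN : ∀ N : ℕ, ∀ k : Fin n, (k : ℕ) < N → k < m → πstar ω k = v k := by
      intro N
      induction N with
      | zero => intro k hk; omega
      | succ N ih =>
        intro k hkN hk
        have hprev : ∀ l, l < k → πstar ω l = v l := fun l hl =>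
          ih l (by omega) (lt_trans hl hk)
        -- X k (v k) ≤ X k (πstar ω k)
        have h1 : X k (v k) ω ≤ X k (πstar ω k) ω := by
          apply hgreedy ω k (v k)
          intro l hl hlv
          rw [hprev l hl] at hlv
          exact hv.1 l k hl hk hlv
        -- X k (πstar ω k) ≤ X k (v k)
        have h2 : X k (πstar ω k) ω ≤ X k (v k) ω := by
          apply hB k hk (πstar ω k)
          intro l hl hlp
          rw [← hprev l hl] at hlp
          exact absurd ((πstar ω).injective hlp) (ne_of_lt hl)
        have heq : X k (πstar ω k) ω = X k (v k) ω := le_antisymm h2 h1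
        by_contra hne
        exact hω (Set.mem_iUnion.mpr ⟨k, Set.mem_iUnion.mpr ⟨πstar ω k,
          Set.mem_iUnion.mpr ⟨v k, Set.mem_iUnion.mpr ⟨hne, heq⟩⟩⟩⟩)
    have key : ∀ k : Fin n, k < m → πstar ω k = v k := fun k => keyN n k k.isLt
    funext k
    by_cases hk : k < m
    · simp [trunc, hk, key k hk]
    · simp [trunc, hk, hv.2 k hk]

end Aux2
section Aux3

variable {Ω : Type*} [MeasurableSpace Ω] {μ : Measure Ω} [IsProbabilityMeasure μ]
  {n : ℕ} {X : Fin n → Fin n → Ω → ℝ} {πstar : Ω → Equiv.Perm (Fin n)}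

lemma gaussian_singleton (x : ℝ) : (gaussianReal 0 1) {x} = 0 :=
  gaussianReal_absolutelyContinuous 0 one_ne_zero (measure_singleton x)

lemma tieSet_null (hmeas : ∀ i j, Measurable (X i j))
    (hdist : ∀ i j, Measure.map (X i j) μ = gaussianReal 0 1)
    (hindep : iIndepFun (fun p : Fin n × Fin n => X p.1 p.2) μ) :
    μ (tieSet X) = 0 := by
  rw [tieSet]
  refine measure_iUnion_null fun i => measure_iUnion_null fun j =>
    measure_iUnion_null fun j' => measure_iUnion_null fun hjj' => ?_
  have hne : (i, j) ≠ (i, j') := fun h => hjj' (congrArg Prod.snd h)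
  have hIF : IndepFun (X i j) (X i j') μ := hindep.indepFun hne
  have hmap : μ.map (fun ω => (X i j ω, X i j' ω)) =
      (μ.map (X i j)).prod (μ.map (X i j')) :=
    (indepFun_iff_map_prod_eq_prod_map_map (hmeas i j).aemeasurable
      (hmeas i j').aemeasurable).mp hIF
  have hdiag : MeasurableSet {p : ℝ × ℝ | p.1 = p.2} :=
    measurableSet_eq_fun measurable_fst measurable_snd
  have : {ω | X i j ω = X i j' ω} =
      (fun ω => (X i j ω, X i j' ω)) ⁻¹' {p : ℝ × ℝ | p.1 = p.2} := rfl
  rw [this, ← Measure.map_apply ((hmeas i j).prodMk (hmeas i j')) hdiag, hmap,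
    hdist, hdist, Measure.prod_apply hdiag]
  have hz : ∀ x : ℝ, (gaussianReal 0 1) (Prod.mk x ⁻¹' {p : ℝ × ℝ | p.1 = p.2}) = 0 := by
    intro x
    have : Prod.mk x ⁻¹' {p : ℝ × ℝ | p.1 = p.2} = {x} := by
      ext y; simp [eq_comm]
    rw [this]
    exact gaussian_singleton x
  simp [gaussian_singleton]

end Aux3
section Aux4

variable {Ω : Type*} [MeasurableSpace Ω] {μ : Measure Ω} [IsProbabilityMeasure μ]
  {n : ℕ} {X : Fin n → Fin n → Ω → ℝ} {πstar : Ω → Equiv.Perm (Fin n)}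

lemma single_cdf (hmeas : ∀ i j, Measurable (X i j))
    (hdist : ∀ i j, Measure.map (X i j) μ = gaussianReal 0 1) (i j : Fin n) (t : ℝ) :
    μ {ω | X i j ω ≤ t} = Phi t := by
  have : {ω | X i j ω ≤ t} = X i j ⁻¹' Set.Iic t := rfl
  rw [this, ← Measure.map_apply (hmeas i j) measurableSet_Iic, hdist]
  rfl

lemma row_prod (hmeas : ∀ i j, Measurable (X i j))
    (hdist : ∀ i j, Measure.map (X i j) μ = gaussianReal 0 1)
    (hindep : iIndepFun (fun p : Fin n × Fin n => X p.1 p.2) μ)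
    (i : Fin n) (S : Finset (Fin n)) (t : ℝ) :
    μ (⋂ j ∈ S, {ω | X i j ω ≤ t}) = Phi t ^ S.card := by
  classical
  set emb : Fin n ↪ Fin n × Fin n := ⟨fun j => (i, j), fun a b h => congrArg Prod.snd h⟩
  have h := hindep.measure_inter_preimage_eq_mul (S.map emb)
    (sets := fun _ => Set.Iic t) (fun p _ => measurableSet_Iic)
  have heq : (⋂ p ∈ S.map emb, (fun ω => X p.1 p.2 ω) ⁻¹' Set.Iic t) =
      ⋂ j ∈ S, {ω | X i j ω ≤ t} := by
    ext ω
    simp only [Set.mem_iInter, Finset.mem_map, Set.mem_preimage, Set.mem_Iic,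
      Set.mem_setOf_eq]
    constructor
    · intro h j hj
      exact h (i, j) ⟨j, hj, rfl⟩
    · rintro h p ⟨j, hj, rfl⟩
      exact h j hj
  rw [heq] at h
  rw [h, Finset.prod_map]
  rw [Finset.prod_congr rfl (fun j _ => by
    show μ ((fun ω => X i j ω) ⁻¹' Set.Iic t) = Phi t
    exact single_cdf hmeas hdist i j t)]
  rw [Finset.prod_const]

lemma good_card (m : Fin n) (v : Fin n → Fin n) (hv : goodv m v) :
    (Finset.univ.filter fun j : Fin n => ∀ k, k < m → v k ≠ j).card = n - m := by
  classical
  have himg : (Finset.univ.filter fun j : Fin n => ∀ k, k < m → v k ≠ j) =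
      ((Finset.Iio m).image v)ᶜ := by
    ext j
    simp only [Finset.mem_filter, Finset.mem_univ, true_and, Finset.mem_compl,
      Finset.mem_image, Finset.mem_Iio, not_exists]
    tauto
  rw [himg, Finset.card_compl, Finset.card_image_of_injOn, Fin.card_Iio, Fintype.card_fin]
  intro a ha b hb hab
  simp only [Finset.coe_Iio, Set.mem_Iio] at ha hb
  by_contra hne
  rcases lt_or_gt_of_ne hne with h | h
  · exact hv.1 a b h hb hab
  · exact hv.1 b a h ha hab.symm

lemma partition_sum (hπmeas : ∀ i, Measurable (fun ω => πstar ω i))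
    (m : Fin n) {A : Set Ω} (hA : MeasurableSet A) :
    μ A = ∑ v : Fin n → Fin n, μ ({ω | trunc πstar m ω = v} ∩ A) := by
  classical
  have hcover : A = ⋃ v : Fin n → Fin n, {ω | trunc πstar m ω = v} ∩ A := by
    ext ω
    simp only [Set.mem_iUnion, Set.mem_inter_iff, Set.mem_setOf_eq]
    exact ⟨fun h => ⟨trunc πstar m ω, rfl, h⟩, fun ⟨v, _, h⟩ => h⟩
  have hdisj : Pairwise (Function.onFun Disjoint
      fun v : Fin n → Fin n => {ω | trunc πstar m ω = v} ∩ A) := by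
    intro v w hvw
    refine Set.disjoint_left.mpr fun ω hv hw => hvw ?_
    rw [← hv.1, ← hw.1]
  calc μ A = μ (⋃ v : Fin n → Fin n, {ω | trunc πstar m ω = v} ∩ A) := by rw [← hcover]
    _ = ∑' v : Fin n → Fin n, μ ({ω | trunc πstar m ω = v} ∩ A) :=
        measure_iUnion hdisj fun v => (trunc_fiber_measurable hπmeas m v).inter hA
    _ = ∑ v : Fin n → Fin n, μ ({ω | trunc πstar m ω = v} ∩ A) := tsum_fintype _

end Aux4
section Aux5

variable {Ω : Type*} [MeasurableSpace Ω] {μ : Measure Ω} [IsProbabilityMeasure μ]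
  {n : ℕ} {X : Fin n → Fin n → Ω → ℝ} {πstar : Ω → Equiv.Perm (Fin n)}

lemma selD_eq_inter (v : Fin n → Fin n) (i : Fin n) (t : ℝ) :
    selD X v i t =
      ⋂ j ∈ (Finset.univ.filter fun j : Fin n => ∀ k, k < i → v k ≠ j),
        {ω | X i j ω ≤ t} := by
  ext ω
  simp [selD]

lemma selD_measure (hmeas : ∀ i j, Measurable (X i j))
    (hdist : ∀ i j, Measure.map (X i j) μ = gaussianReal 0 1)
    (hindep : iIndepFun (fun p : Fin n × Fin n => X p.1 p.2) μ)
    {m : Fin n} {v : Fin n → Fin n} (hv : goodv m v) (tm : ℝ) :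
    μ (selD X v m tm) = Phi tm ^ (n - (m : ℕ)) := by
  rw [selD_eq_inter, row_prod hmeas hdist hindep, good_card m v hv]

lemma indep_step (hmeas : ∀ i j, Measurable (X i j))
    (hindep : iIndepFun (fun p : Fin n × Fin n => X p.1 p.2) μ)
    (m : Fin n) (v : Fin n → Fin n) (s' : Finset (Fin n)) (hs' : ∀ i ∈ s', i < m)
    (t : Fin n → ℝ) (tm : ℝ) :
    μ ((selB X v m ∩ ⋂ i ∈ s', selD X v i (t i)) ∩ selD X v m tm) =
      μ (selB X v m ∩ ⋂ i ∈ s', selD X v i (t i)) * μ (selD X v m tm) := by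
  classical
  set S : Finset (Fin n × Fin n) := Finset.univ.filter (fun p => p.1 < m) with hS
  set T : Finset (Fin n × Fin n) := Finset.univ.filter (fun p => p.1 = m) with hT
  have hST : Disjoint S T := by
    rw [Finset.disjoint_left]
    intro p hp hq
    rw [hS, Finset.mem_filter] at hp
    rw [hT, Finset.mem_filter] at hq
    rw [hq.2] at hp
    exact lt_irrefl m hp.2
  have hFG : IndepFun (fun a (p : S) => X (p : Fin n × Fin n).1 (p : Fin n × Fin n).2 a)
      (fun a (p : T) => X (p : Fin n × Fin n).1 (p : Fin n × Fin n).2 a) μ :=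
    hindep.indepFun_finset S T hST (fun p => hmeas p.1 p.2)
  have memS : ∀ {k j : Fin n}, k < m → ((k, j) : Fin n × Fin n) ∈ S := by
    intro k j hk
    rw [hS, Finset.mem_filter]
    exact ⟨Finset.mem_univ _, hk⟩
  have memT : ∀ {j : Fin n}, ((m, j) : Fin n × Fin n) ∈ T := by
    intro j
    rw [hT, Finset.mem_filter]
    exact ⟨Finset.mem_univ _, rfl⟩
  set MA : Set (S → ℝ) :=
    (⋂ (k : Fin n) (hk : k < m) (j : Fin n) (_ : ∀ l, l < k → v l ≠ j),
      {f : S → ℝ | f ⟨(k, j), memS hk⟩ ≤ f ⟨(k, v k), memS hk⟩}) ∩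
    (⋂ (i : Fin n) (hi : i ∈ s') (j : Fin n) (_ : ∀ k, k < i → v k ≠ j),
      {f : S → ℝ | f ⟨(i, j), memS (hs' i hi)⟩ ≤ t i}) with hMA
  set MB : Set (T → ℝ) :=
    ⋂ (j : Fin n) (_ : ∀ k, k < m → v k ≠ j),
      {f : T → ℝ | f ⟨(m, j), memT⟩ ≤ tm} with hMB
  have hMAm : MeasurableSet MA := by
    refine MeasurableSet.inter ?_ ?_
    · refine MeasurableSet.iInter fun k => MeasurableSet.iInter fun hk =>
        MeasurableSet.iInter fun j => MeasurableSet.iInter fun _ => ?_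
      exact measurableSet_le (measurable_pi_apply _) (measurable_pi_apply _)
    · refine MeasurableSet.iInter fun i => MeasurableSet.iInter fun hi =>
        MeasurableSet.iInter fun j => MeasurableSet.iInter fun _ => ?_
      exact measurableSet_le (measurable_pi_apply _) measurable_const
  have hMBm : MeasurableSet MB := by
    refine MeasurableSet.iInter fun j => MeasurableSet.iInter fun _ => ?_
    exact measurableSet_le (measurable_pi_apply _) measurable_const
  have hA : selB X v m ∩ ⋂ i ∈ s', selD X v i (t i) =
      (fun a (p : S) => X (p : Fin n × Fin n).1 (p : Fin n × Fin n).2 a) ⁻¹' MA := by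
    ext ω
    simp only [hMA, Set.mem_inter_iff, Set.mem_preimage, Set.mem_iInter,
      Set.mem_setOf_eq, selB, selD, Finset.mem_coe]
  have hB : selD X v m tm =
      (fun a (p : T) => X (p : Fin n × Fin n).1 (p : Fin n × Fin n).2 a) ⁻¹' MB := by
    ext ω
    simp only [hMB, Set.mem_preimage, Set.mem_iInter, Set.mem_setOf_eq, selD]
  rw [hA, hB]
  exact hFG.measure_inter_preimage_eq_mul MA MB hMAm hMBm

end Aux5
section Aux6

variable {Ω : Type*} [MeasurableSpace Ω] {μ : Measure Ω} [IsProbabilityMeasure μ]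
  {n : ℕ} {X : Fin n → Fin n → Ω → ℝ} {πstar : Ω → Equiv.Perm (Fin n)}

lemma main_prod (hmeas : ∀ i j, Measurable (X i j))
    (hdist : ∀ i j, Measure.map (X i j) μ = gaussianReal 0 1)
    (hindep : iIndepFun (fun p : Fin n × Fin n => X p.1 p.2) μ)
    (hπmeas : ∀ i, Measurable (fun ω => πstar ω i))
    (hgreedy : ∀ ω (i j : Fin n), (∀ k, k < i → πstar ω k ≠ j) →
      X i j ω ≤ X i (πstar ω i) ω)
    (s : Finset (Fin n)) (t : Fin n → ℝ) :
    μ (⋂ i ∈ s, selE X πstar i (t i)) = ∏ i ∈ s, Phi (t i) ^ (n - (i : ℕ)) := by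
  classical
  induction s using Finset.induction_on_max with
  | empty => simp
  | insert m s' hmax IH =>
    set Z : Set Ω := ⋂ i ∈ s', selE X πstar i (t i) with hZ
    have hZmeas : MeasurableSet Z :=
      Finset.measurableSet_biInter s' fun i _ => selE_measurable hmeas hπmeas i (t i)
    have hEmeas : MeasurableSet (selE X πstar m (t m)) :=
      selE_measurable hmeas hπmeas m (t m)
    have hsplit : (⋂ i ∈ insert m s', selE X πstar i (t i)) =
        selE X πstar m (t m) ∩ Z := by
      rw [Finset.set_biInter_insert]
    rw [hsplit]
    have haenotin : ∀ᵐ ω ∂μ, ω ∉ tieSet X := by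
      rw [← measure_eq_zero_iff_ae_notMem]
      exact tieSet_null hmeas hdist hindep
    -- per-fiber computation
    have hterm : ∀ v : Fin n → Fin n,
        μ ({ω | trunc πstar m ω = v} ∩ (selE X πstar m (t m) ∩ Z)) =
          Phi (t m) ^ (n - (m : ℕ)) * μ ({ω | trunc πstar m ω = v} ∩ Z) := by
      intro v
      by_cases hv : goodv m v
      · -- rewrite E's as D's on the fiber
        set ZD : Set Ω := ⋂ i ∈ s', selD X v i (t i) with hZD
        have hfibE : {ω | trunc πstar m ω = v} ∩ (selE X πstar m (t m) ∩ Z) =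
            {ω | trunc πstar m ω = v} ∩ (selD X v m (t m) ∩ ZD) := by
          ext ω
          simp only [Set.mem_inter_iff, Set.mem_setOf_eq, hZ, hZD, Set.mem_iInter]
          constructor
          · rintro ⟨hf, hE, hZ'⟩
            exact ⟨hf, (fiber_selE_eq_selD hf le_rfl (t m)).mp hE,
              fun i hi => (fiber_selE_eq_selD hf (le_of_lt (hmax i hi)) (t i)).mp (hZ' i hi)⟩
          · rintro ⟨hf, hD, hZ'⟩
            exact ⟨hf, (fiber_selE_eq_selD hf le_rfl (t m)).mpr hD,
              fun i hi => (fiber_selE_eq_selD hf (le_of_lt (hmax i hi)) (t i)).mpr (hZ' i hi)⟩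
        have hfibZ : {ω | trunc πstar m ω = v} ∩ Z =
            {ω | trunc πstar m ω = v} ∩ ZD := by
          ext ω
          simp only [Set.mem_inter_iff, Set.mem_setOf_eq, hZ, hZD, Set.mem_iInter]
          constructor
          · rintro ⟨hf, hZ'⟩
            exact ⟨hf, fun i hi => (fiber_selE_eq_selD hf (le_of_lt (hmax i hi)) (t i)).mp
              (hZ' i hi)⟩
          · rintro ⟨hf, hZ'⟩
            exact ⟨hf, fun i hi => (fiber_selE_eq_selD hf (le_of_lt (hmax i hi)) (t i)).mpr
              (hZ' i hi)⟩
        -- a.e. replace fiber by selB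
        have hae : ∀ (W : Set Ω),
            μ ({ω | trunc πstar m ω = v} ∩ W) = μ (selB X v m ∩ W) := by
          intro W
          refine measure_congr ?_
          rw [Filter.eventuallyEq_set]
          filter_upwards [haenotin] with ω hω
          simp only [Set.mem_inter_iff, Set.mem_setOf_eq]
          exact and_congr_left fun _ => fiber_iff_selB hgreedy hv hω
        rw [hfibE, hfibZ, hae, hae]
        have : selB X v m ∩ (selD X v m (t m) ∩ ZD) =
            (selB X v m ∩ ZD) ∩ selD X v m (t m) := by
          ext ω; simp only [Set.mem_inter_iff]; tauto
        rw [this, indep_step hmeas hindep m v s' hmax t (t m),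
          selD_measure hmeas hdist hindep hv (t m)]
        exact mul_comm _ _
      · rw [fiber_empty_of_not_good hv]
        simp
    -- assemble
    rw [partition_sum hπmeas m (hEmeas.inter hZmeas)]
    calc (∑ v : Fin n → Fin n, μ ({ω | trunc πstar m ω = v} ∩ (selE X πstar m (t m) ∩ Z)))
        = ∑ v : Fin n → Fin n, Phi (t m) ^ (n - (m : ℕ)) *
            μ ({ω | trunc πstar m ω = v} ∩ Z) := by
          exact Finset.sum_congr rfl fun v _ => hterm v
      _ = Phi (t m) ^ (n - (m : ℕ)) *
            ∑ v : Fin n → Fin n, μ ({ω | trunc πstar m ω = v} ∩ Z) := by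
          rw [Finset.mul_sum]
      _ = Phi (t m) ^ (n - (m : ℕ)) * μ Z := by
          rw [← partition_sum hπmeas m hZmeas]
      _ = ∏ i ∈ insert m s', Phi (t i) ^ (n - (i : ℕ)) := by
          rw [IH, Finset.prod_insert (fun hm => lt_irrefl m (hmax m hm))]

end Aux6
/-- Let `X i j` (`i j < n`) be i.i.d. standard normal and let the
greedy random permutation `π*` pick in row `i` the largest entry among columns
not chosen in the previous rows. Then the selected entries
`X 0 (π* 0), …, X (n-1) (π* (n-1))` are independent, and the `i`-th selected
entry is distributed as the maximum of `n - i` i.i.d. standard normals, i.e.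
its distribution function is `Φ(t)^(n-i)`. -/
theorem greedy_selected_entries_indep_and_law
    {Ω : Type*} [MeasurableSpace Ω] (μ : Measure Ω) [IsProbabilityMeasure μ]
    (n : ℕ) (X : Fin n → Fin n → Ω → ℝ)
    (hmeas : ∀ i j, Measurable (X i j))
    (hdist : ∀ i j, Measure.map (X i j) μ = gaussianReal 0 1)
    (hindep : iIndepFun (fun p : Fin n × Fin n => X p.1 p.2) μ)
    (πstar : Ω → Equiv.Perm (Fin n))
    (hπmeas : ∀ i, Measurable (fun ω => πstar ω i))
    (hgreedy : ∀ ω (i j : Fin n), (∀ k, k < i → πstar ω k ≠ j) →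
      X i j ω ≤ X i (πstar ω i) ω) :
    iIndepFun (fun (i : Fin n) ω => X i (πstar ω i) ω) μ ∧
    ∀ (i : Fin n) (t : ℝ),
      (μ {ω | X i (πstar ω i) ω ≤ t}).toReal = stdNormalCDF t ^ (n - (i : ℕ)) := by
  classical
  have hYmeas : ∀ i : Fin n, Measurable (fun ω => X i (πstar ω i) ω) := by
    intro i
    have : (fun ω => X i (πstar ω i) ω) =
        fun ω => ∑ j : Fin n, if πstar ω i = j then X i j ω else 0 := by
      funext ω
      rw [Finset.sum_ite_eq]
      simp
    rw [this]
    refine Finset.measurable_sum _ fun j _ => Measurable.ite ?_ (hmeas i j) measurable_const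
    exact (hπmeas i) (measurableSet_singleton j)
  have hsingle : ∀ (i : Fin n) (t : ℝ),
      μ {ω | X i (πstar ω i) ω ≤ t} = Phi t ^ (n - (i : ℕ)) := by
    intro i t
    rw [selE_eq hgreedy]
    have := main_prod hmeas hdist hindep hπmeas hgreedy {i} (fun _ => t)
    simpa using this
  constructor
  · rw [iIndepFun_iff_iIndep]
    refine iIndepSets.iIndep (fun i => (hYmeas i).comap_le)
      (fun i => {s | ∃ r : ℝ, (fun ω => X i (πstar ω i) ω) ⁻¹' Set.Iic r = s}) ?_ ?_ ?_
    · intro k s hs t' ht' _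
      obtain ⟨a, rfl⟩ := hs
      obtain ⟨b, rfl⟩ := ht'
      exact ⟨min a b, by rw [← Set.preimage_inter, Set.Iic_inter_Iic]⟩
    · intro i
      have hre : (Real.measurableSpace : MeasurableSpace ℝ) =
          MeasurableSpace.generateFrom (Set.range Set.Iic) := by
        rw [← borel_eq_generateFrom_Iic]
        exact BorelSpace.measurable_eq
      conv_lhs => rw [hre]
      rw [MeasurableSpace.comap_generateFrom]
      congr 1
      ext s
      simp only [Set.mem_image, Set.mem_range, Set.mem_setOf_eq]
      constructor
      · rintro ⟨u, ⟨r, rfl⟩, rfl⟩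
        exact ⟨r, rfl⟩
      · rintro ⟨r, rfl⟩
        exact ⟨Set.Iic r, ⟨r, rfl⟩, rfl⟩
    · rw [iIndepSets_iff]
      intro s f H
      have ht : ∀ i ∈ s, ∃ r : ℝ,
          (fun ω => X i (πstar ω i) ω) ⁻¹' Set.Iic r = f i := fun i hi => H i hi
      choose! r hr using ht
      have hfE : ∀ i ∈ s, f i = selE X πstar i (r i) := by
        intro i hi
        rw [← hr i hi]
        have : (fun ω => X i (πstar ω i) ω) ⁻¹' Set.Iic (r i) =
            {ω | X i (πstar ω i) ω ≤ r i} := rfl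
        rw [this, selE_eq hgreedy]
      calc μ (⋂ i ∈ s, f i) = μ (⋂ i ∈ s, selE X πstar i (r i)) := by
            congr 1
            exact Set.iInter₂_congr hfE
        _ = ∏ i ∈ s, Phi (r i) ^ (n - (i : ℕ)) :=
            main_prod hmeas hdist hindep hπmeas hgreedy s r
        _ = ∏ i ∈ s, μ (f i) := by
            refine Finset.prod_congr rfl fun i hi => ?_
            rw [hfE i hi, ← selE_eq hgreedy, hsingle i (r i)]
  · intro i t
    rw [hsingle i t, ENNReal.toReal_pow]
    rfl
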